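/- Let $(D, \Sigma)$ be a measurable space, $\nu$ a finite measure on $D$, and $F : D \to [0, \infty)$ a bounded measurable function. For each $\epsilon \in (0,1]$ let $g(\epsilon) > 0$, let $m_{\epsilon}$ be a finite measure on $D$, and let $p_{\epsilon} : D \to [0,1]$ be measurable. Suppose that as $\epsilon \to 0$: (i) $g(\epsilon) m_{\epsilon}(B) \to \nu(B)$ for every $B \in \Sigma$; (ii) $\sup_{x \in D} |p_{\epsilon}(x)/g(\epsilon) - F(x)| \to 0$; and (iii) $\sup_{\epsilon \in (0,1]} g(\epsilon) m_{\epsilon}(D) < \infty$. Then $\int_D p_{\epsilon} \, dm_{\epsilon} \to \int_D F \, d\nu$ as $\epsilon \to 0$; consequently, if for each $\epsilon$ the random variable $\eta_{\epsilon}$ has Poisson distribution with parameter $\int_D p_{\epsilon} \, dm_{\epsilon}$, then $\eta_{\epsilon}$ converges in distribution to the Poisson distribution with parameter $a = \int_D F \, d\nu$. -/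

import Mathlib

open MeasureTheory Filter Topology

/-- the analytic core of the paper's Theorem 4.  On a measurable space `D` with
finite measure `ν` and bounded measurable `F ≥ 0`, suppose that as `ε → 0⁺`:
(i) `g ε · m_ε(B) → ν(B)` for every measurable `B`; (ii) `p_ε/g ε → F` uniformly on `D`;
(iii) `g ε · m_ε(D)` is bounded uniformly in `ε ∈ (0,1]`.  Then
`∫_D p_ε dm_ε → ∫_D F dν`, and consequently, if for each `ε` the random variable `η_ε`
(encoded via its law `η ε` on `ℕ`) is Poisson with parameter `∫_D p_ε dm_ε`, then `η_ε`
converges in distribution to the Poisson law with parameter `a = ∫_D F dν`, i.e.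
`P(η_ε = j) → a^j e^{-a}/j!` for every `j`. -/
theorem rarefaction_poisson_limit_random
    (D : Type) [MeasurableSpace D]
    (ν : Measure D) [IsFiniteMeasure ν]
    (F : D → ℝ) (hFmeas : Measurable F) (hFnn : ∀ x, 0 ≤ F x)
    (hFbdd : ∃ Cb : ℝ, ∀ x, F x ≤ Cb)
    (g : ℝ → ℝ) (hgpos : ∀ ε ∈ Set.Ioc (0 : ℝ) 1, 0 < g ε)
    (m : ℝ → Measure D) (hm : ∀ ε ∈ Set.Ioc (0 : ℝ) 1, IsFiniteMeasure (m ε))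
    (p : ℝ → D → ℝ) (hpmeas : ∀ ε ∈ Set.Ioc (0 : ℝ) 1, Measurable (p ε))
    (hp01 : ∀ ε ∈ Set.Ioc (0 : ℝ) 1, ∀ x, p ε x ∈ Set.Icc (0 : ℝ) 1)
    (hsetwise : ∀ B : Set D, MeasurableSet B →
      Tendsto (fun ε => g ε * (m ε B).toReal) (𝓝[>] (0 : ℝ)) (𝓝 (ν B).toReal))
    (hpunif : ∀ δ > (0 : ℝ), ∀ᶠ ε in 𝓝[>] (0 : ℝ), ∀ x, |p ε x / g ε - F x| ≤ δ)
    (hbdd : ∃ Cm : ℝ, ∀ ε ∈ Set.Ioc (0 : ℝ) 1, g ε * (m ε Set.univ).toReal ≤ Cm) :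
    Tendsto (fun ε => ∫ x, p ε x ∂(m ε)) (𝓝[>] (0 : ℝ)) (𝓝 (∫ x, F x ∂ν)) ∧
    ∀ η : ℝ → Measure ℕ,
      (∀ ε ∈ Set.Ioc (0 : ℝ) 1, ∀ j : ℕ,
        η ε {j} = ENNReal.ofReal ((∫ x, p ε x ∂(m ε)) ^ j / (Nat.factorial j)
          * Real.exp (-∫ x, p ε x ∂(m ε)))) →
      ∀ j : ℕ, Tendsto (fun ε => (η ε {j}).toReal) (𝓝[>] (0 : ℝ))
        (𝓝 ((∫ x, F x ∂ν) ^ j / (Nat.factorial j) * Real.exp (-∫ x, F x ∂ν))) := by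
  obtain ⟨Cb₀, hCb₀⟩ := hFbdd
  obtain ⟨Cm₀, hCm₀⟩ := hbdd
  set Cb : ℝ := max Cb₀ 0 with hCb_def
  set Cm : ℝ := max Cm₀ 0 with hCm_def
  have hCb : ∀ x, F x ≤ Cb := fun x => (hCb₀ x).trans (le_max_left _ _)
  have hCm : ∀ ε ∈ Set.Ioc (0 : ℝ) 1, g ε * (m ε Set.univ).toReal ≤ Cm :=
    fun ε hε => (hCm₀ ε hε).trans (le_max_left _ _)
  have hCbnn : (0 : ℝ) ≤ Cb := le_max_right _ _
  have hCmnn : (0 : ℝ) ≤ Cm := le_max_right _ _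
  -- eventual membership in Ioc 0 1
  have hIoc : ∀ᶠ ε in 𝓝[>] (0 : ℝ), ε ∈ Set.Ioc (0 : ℝ) 1 := by
    filter_upwards [Ioo_mem_nhdsGT_of_mem (Set.mem_Ico.2 ⟨le_refl (0:ℝ), one_pos⟩)] with ε hε
    exact ⟨hε.1, hε.2.le⟩
  -- integrability of F
  have hFint : ∀ (μ : Measure D) [IsFiniteMeasure μ], Integrable F μ := by
    intro μ _
    refine ⟨hFmeas.aestronglyMeasurable, HasFiniteIntegral.of_bounded (C := Cb) ?_⟩
    filter_upwards with x
    rw [Real.norm_eq_abs, abs_of_nonneg (hFnn x)]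
    exact hCb x
  -- measurability of the level sets
  have hlevel : ∀ t : ℝ, MeasurableSet {a : D | t < F a} := by
    intro t
    exact hFmeas measurableSet_Ioi
  -- Step A : g ε * ∫ F dm ε → ∫ F dν, via the layer-cake formula and dominated convergence
  have stepA : Tendsto (fun ε => g ε * ∫ x, F x ∂(m ε)) (𝓝[>] (0 : ℝ)) (𝓝 (∫ x, F x ∂ν)) := by
    have hνeq : ∫ x, F x ∂ν = ∫ t in Set.Ioi (0:ℝ), ((ν {a : D | t < F a}).toReal) :=
      Integrable.integral_eq_integral_meas_lt (hFint ν) (Eventually.of_forall hFnn)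
    rw [hνeq]
    have key : Tendsto (fun ε => ∫ t in Set.Ioi (0:ℝ), g ε * (m ε {a : D | t < F a}).toReal)
        (𝓝[>] (0 : ℝ)) (𝓝 (∫ t in Set.Ioi (0:ℝ), ((ν {a : D | t < F a}).toReal))) := by
      refine tendsto_integral_filter_of_dominated_convergence
        (bound := Set.indicator (Set.Ioc (0:ℝ) Cb) (fun _ => Cm)) ?_ ?_ ?_ ?_
      · -- a.e. strong measurability
        filter_upwards [hIoc] with ε hε
        have hmono : Antitone (fun t : ℝ => m ε {a : D | t < F a}) := by
          intro s t hst
          exact measure_mono (fun a ha => lt_of_le_of_lt hst ha)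
        exact ((measurable_const.mul
          (ENNReal.measurable_toReal.comp hmono.measurable))).aestronglyMeasurable
      · -- domination
        filter_upwards [hIoc] with ε hε
        refine (ae_restrict_iff' measurableSet_Ioi).2 (Eventually.of_forall fun t ht => ?_)
        have hgnn : 0 ≤ g ε := (hgpos ε hε).le
        haveI := hm ε hε
        rcases le_or_gt t Cb with hle | hgt
        · have hmem : t ∈ Set.Ioc (0:ℝ) Cb := ⟨ht, hle⟩
          rw [Set.indicator_of_mem hmem]
          rw [Real.norm_eq_abs, abs_of_nonneg (by positivity)]
          calc g ε * (m ε {a : D | t < F a}).toReal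
              ≤ g ε * (m ε Set.univ).toReal := by
                apply mul_le_mul_of_nonneg_left _ hgnn
                exact ENNReal.toReal_mono (measure_ne_top _ _) (measure_mono (Set.subset_univ _))
            _ ≤ Cm := hCm ε hε
        · have hempty : {a : D | t < F a} = ∅ := by
            ext a; simp only [Set.mem_setOf_eq, Set.mem_empty_iff_false, iff_false, not_lt]
            exact (hCb a).trans hgt.le
          rw [hempty]
          simp only [measure_empty, ENNReal.toReal_zero, mul_zero, norm_zero]
          exact Set.indicator_nonneg (fun _ _ => hCmnn) t
      · -- the bound is integrable
        refine Integrable.restrict ?_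
        exact IntegrableOn.integrable_indicator
          (integrableOn_const measure_Ioc_lt_top.ne) measurableSet_Ioc
      · -- pointwise convergence
        filter_upwards with t
        exact hsetwise _ (hlevel t)
    refine key.congr' ?_
    filter_upwards [hIoc] with ε hε
    haveI := hm ε hε
    rw [MeasureTheory.integral_const_mul]
    exact congrArg (fun r => g ε * r)
      (Integrable.integral_eq_integral_meas_lt (hFint (m ε)) (Eventually.of_forall hFnn)).symm
  -- Step B : the difference tends to 0
  have stepB : Tendsto (fun ε => (∫ x, p ε x ∂(m ε)) - g ε * ∫ x, F x ∂(m ε))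
      (𝓝[>] (0 : ℝ)) (𝓝 0) := by
    rw [Metric.tendsto_nhds]
    intro δ' hδ'
    have hδpos : 0 < δ' / (Cm + 1) := by positivity
    filter_upwards [hIoc, hpunif _ hδpos] with ε hε hunif
    haveI := hm ε hε
    have hgpos' := hgpos ε hε
    have hpint : Integrable (p ε) (m ε) := by
      refine ⟨(hpmeas ε hε).aestronglyMeasurable, HasFiniteIntegral.of_bounded (C := 1) ?_⟩
      filter_upwards with x
      rw [Real.norm_eq_abs, abs_of_nonneg (hp01 ε hε x).1]
      exact (hp01 ε hε x).2
    have hdiff : (∫ x, p ε x ∂(m ε)) - g ε * ∫ x, F x ∂(m ε)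
        = ∫ x, (p ε x - g ε * F x) ∂(m ε) := by
      rw [integral_sub hpint (((hFint (m ε))).const_mul (g ε)), MeasureTheory.integral_const_mul]
    rw [Real.dist_eq, sub_zero, hdiff]
    have hnormle : ‖∫ x, (p ε x - g ε * F x) ∂(m ε)‖ ≤ (δ' / (Cm + 1) * g ε) * (m ε Set.univ).toReal := by
      apply norm_integral_le_of_norm_le_const
      filter_upwards with x
      rw [Real.norm_eq_abs]
      have hrw : p ε x - g ε * F x = g ε * (p ε x / g ε - F x) := by
        field_simp
      calc |p ε x - g ε * F x| = g ε * |p ε x / g ε - F x| := by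
            rw [hrw, abs_mul, abs_of_pos hgpos']
          _ ≤ g ε * (δ' / (Cm + 1)) := mul_le_mul_of_nonneg_left (hunif x) hgpos'.le
          _ = δ' / (Cm + 1) * g ε := by ring
    rw [← Real.norm_eq_abs]
    calc ‖∫ x, (p ε x - g ε * F x) ∂(m ε)‖
        ≤ (δ' / (Cm + 1) * g ε) * (m ε Set.univ).toReal := hnormle
      _ = δ' / (Cm + 1) * (g ε * (m ε Set.univ).toReal) := by ring
      _ ≤ δ' / (Cm + 1) * Cm := by
          exact mul_le_mul_of_nonneg_left (hCm ε hε) hδpos.le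
      _ < δ' := by
          rw [div_mul_eq_mul_div, div_lt_iff₀ (by positivity)]
          nlinarith
  -- main convergence
  have hmain : Tendsto (fun ε => ∫ x, p ε x ∂(m ε)) (𝓝[>] (0 : ℝ)) (𝓝 (∫ x, F x ∂ν)) := by
    have := stepB.add stepA
    rw [zero_add] at this
    refine this.congr ?_
    intro ε; ring
  refine ⟨hmain, ?_⟩
  intro η hη j
  have hφcont : Continuous (fun t : ℝ => t ^ j / (Nat.factorial j) * Real.exp (-t)) := by
    exact ((continuous_pow j).div_const _).mul (Real.continuous_exp.comp continuous_neg)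
  have hcomp := (hφcont.tendsto _).comp hmain
  refine hcomp.congr' ?_
  filter_upwards [hIoc] with ε hε
  haveI := hm ε hε
  have hpint_nn : 0 ≤ ∫ x, p ε x ∂(m ε) := integral_nonneg (fun x => (hp01 ε hε x).1)
  rw [hη ε hε j, ENNReal.toReal_ofReal (by positivity)]
  rfl
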